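/- (Quasi-shuffle identity via surjections) Let u = a_1⋯a_{k_1} and v = a_{k_1+1}⋯a_{k_1+k_2} be words over the alphabet A. For every commutative semiring S, every d-dimensional time series z over S, and all integers 0 ≤ s ≤ t, one has ⟨ISS_{s,t}(z), u⟩ ⊙ ⟨ISS_{s,t}(z), v⟩ = ⊕_{k = max(k_1,k_2)}^{k_1+k_2} ⊕_{f ∈ qSh(k_1,k_2;k)} ⟨ISS_{s,t}(z), b^f_1 ⋯ b^f_k⟩, where b^f_l := Σ_{m ∈ f^{-1}({l})} a_m is the componentwise sum of the exponent vectors of the letters mapped to l. -/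

import Mathlib

/-- The monomial `z^{⊙a}` associated to an exponent vector `a ∈ ℕ^d` and `z ∈ S^d`. -/
def monom {S : Type*} [CommSemiring S] {d : ℕ} (z : Fin d → S) (a : Fin d → ℕ) : S :=
  ∏ i, z i ^ a i

/-- The iterated-sums signature coefficient
`⟨ISS_{s,t}(z), w⟩ = ⊕_{s < j_1 < ⋯ < j_k ≤ t} z_{j_1}^{⊙w_1} ⊙ ⋯ ⊙ z_{j_k}^{⊙w_k}`. -/
def ISS {S : Type*} [CommSemiring S] {d : ℕ} (z : ℕ → Fin d → S) :
    ℕ → ℕ → List (Fin d → ℕ) → S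
  | _, _, [] => 1
  | s, t, a :: w => ∑ j ∈ Finset.Ioc s t, monom (z j) a * ISS z j t w

/-- A `(k₁,k₂)`-quasi-shuffle of type `k`: a surjection `f : {1,…,k₁+k₂} ↠ {1,…,k}`
which is strictly increasing on the first `k₁` indices and on the last `k₂` indices. -/
def IsQuasiShuffle (k₁ k₂ k : ℕ) (f : Fin (k₁ + k₂) → Fin k) : Prop :=
  Function.Surjective f ∧
    (∀ i j : Fin (k₁ + k₂), (i : ℕ) < j → (j : ℕ) < k₁ → f i < f j) ∧
    (∀ i j : Fin (k₁ + k₂), k₁ ≤ (i : ℕ) → (i : ℕ) < j → f i < f j)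

open scoped Classical in
noncomputable def SM (k s t : ℕ) : Finset (Fin k → ℕ) :=
  (Fintype.piFinset fun _ => Finset.Ioc s t).filter StrictMono

lemma mem_SM {k s t : ℕ} {g : Fin k → ℕ} :
    g ∈ SM k s t ↔ (∀ i, g i ∈ Finset.Ioc s t) ∧ StrictMono g := by
  classical
  simp [SM, Fintype.mem_piFinset]

lemma monom_sum {S : Type*} [CommSemiring S] {d : ℕ} (z : Fin d → S) {ι : Type*}
    (s : Finset ι) (a : ι → Fin d → ℕ) :
    monom z (∑ m ∈ s, a m) = ∏ m ∈ s, monom z (a m) := by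
  unfold monom
  calc ∏ i, z i ^ (∑ m ∈ s, a m) i
      = ∏ i, ∏ m ∈ s, z i ^ a m i := by
        refine Finset.prod_congr rfl fun i _ => ?_
        rw [Finset.prod_pow_eq_pow_sum]
        simp
    _ = _ := Finset.prod_comm

lemma strictMono_cons {k : ℕ} {j : ℕ} {g : Fin k → ℕ} (hg : StrictMono g)
    (hj : ∀ i, j < g i) : StrictMono (Fin.cons j g) := by
  intro a b hab
  induction a using Fin.cases with
  | zero =>
    induction b using Fin.cases with
    | zero => exact absurd hab (lt_irrefl _)
    | succ b' => simpa using hj b'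
  | succ a' =>
    induction b using Fin.cases with
    | zero => exact absurd hab (by simp [Fin.lt_def])
    | succ b' =>
      simp only [Fin.cons_succ]
      exact hg (by simpa [Fin.succ_lt_succ_iff] using hab)

lemma ISS_eq_sum {S : Type*} [CommSemiring S] {d : ℕ} (z : ℕ → Fin d → S) (t : ℕ)
    {k : ℕ} (w : Fin k → Fin d → ℕ) (s : ℕ) :
    ISS z s t (List.ofFn w) = ∑ g ∈ SM k s t, ∏ i, monom (z (g i)) (w i) := by
  induction k generalizing s with
  | zero =>
    have : SM 0 s t = Finset.univ := by
      ext g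
      simp only [mem_SM, Finset.mem_univ, iff_true]
      exact ⟨fun i => i.elim0, Subsingleton.strictMono g⟩
    simp [ISS, this]
  | succ k ih =>
    rw [List.ofFn_succ]
    show (∑ j ∈ Finset.Ioc s t, monom (z j) (w 0) * ISS z j t (List.ofFn fun i => w i.succ)) = _
    simp_rw [fun j => ih (fun i => w i.succ) j, Finset.mul_sum]
    rw [Finset.sum_sigma']
    refine Finset.sum_nbij' (fun x => Fin.cons x.1 x.2) (fun g => ⟨g 0, fun i => g i.succ⟩)
      ?_ ?_ ?_ ?_ ?_
    · rintro ⟨j, g⟩ hx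
      rw [Finset.mem_sigma] at hx
      obtain ⟨hj, hg⟩ := hx
      rw [mem_SM] at hg ⊢
      simp only [Finset.mem_Ioc] at hj
      constructor
      · intro i
        induction i using Fin.cases with
        | zero => simpa using hj
        | succ i' =>
          have := (hg.1 i')
          simp only [Finset.mem_Ioc] at this ⊢
          exact ⟨lt_of_le_of_lt hj.1.le this.1, this.2⟩
      · exact strictMono_cons hg.2 (fun i => (Finset.mem_Ioc.mp (hg.1 i)).1)
    · rintro g hg
      rw [mem_SM] at hg
      rw [Finset.mem_sigma]
      refine ⟨hg.1 0, ?_⟩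
      rw [mem_SM]
      refine ⟨fun i => ?_, hg.2.comp Fin.strictMono_succ⟩
      have h1 := hg.1 i.succ
      simp only [Finset.mem_Ioc] at h1 ⊢
      exact ⟨hg.2 (Fin.succ_pos i), h1.2⟩
    · rintro ⟨j, g⟩ _
      simp [Fin.cons_zero, Fin.cons_succ]
    · intro g _
      exact Fin.cons_self_tail g
    · rintro ⟨j, g⟩ _
      rw [Fin.prod_univ_succ]
      simp [Fin.cons_zero, Fin.cons_succ]

noncomputable def QSbwd {n : ℕ} (g : Fin n → ℕ) :
    Σ k : ℕ, (Fin n → Fin k) × (Fin k → ℕ) :=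
  ⟨(Finset.image g Finset.univ).card,
   fun m => ((Finset.image g Finset.univ).orderIsoOfFin rfl).symm
      ⟨g m, Finset.mem_image_of_mem g (Finset.mem_univ m)⟩,
   fun l => (((Finset.image g Finset.univ).orderIsoOfFin rfl) l : ℕ)⟩

lemma QSbwd_apply {n : ℕ} (g : Fin n → ℕ) (m : Fin n) :
    (QSbwd g).2.2 ((QSbwd g).2.1 m) = g m := by
  show ((((Finset.image g Finset.univ).orderIsoOfFin rfl)
    (((Finset.image g Finset.univ).orderIsoOfFin rfl).symm _)) : ℕ) = g m
  rw [OrderIso.apply_symm_apply]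

lemma QSbwd_h_strictMono {n : ℕ} (g : Fin n → ℕ) : StrictMono (QSbwd g).2.2 := by
  intro a b hab
  exact Subtype.coe_lt_coe.mpr (((Finset.image g Finset.univ).orderIsoOfFin rfl).strictMono hab)

lemma QSbwd_h_mem {n : ℕ} (g : Fin n → ℕ) (l : Fin (QSbwd g).1) :
    (QSbwd g).2.2 l ∈ Finset.image g Finset.univ :=
  (((Finset.image g Finset.univ).orderIsoOfFin rfl) l).2

lemma QSbwd_lt_iff {n : ℕ} (g : Fin n → ℕ) (i j : Fin n) :
    (QSbwd g).2.1 i < (QSbwd g).2.1 j ↔ g i < g j := by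
  show ((Finset.image g Finset.univ).orderIsoOfFin rfl).symm _ <
    ((Finset.image g Finset.univ).orderIsoOfFin rfl).symm _ ↔ _
  rw [OrderIso.lt_iff_lt]
  exact Subtype.mk_lt_mk

lemma QSbwd_surj {n : ℕ} (g : Fin n → ℕ) : Function.Surjective (QSbwd g).2.1 := by
  intro l
  obtain ⟨m, -, hm⟩ := Finset.mem_image.mp
    ((((Finset.image g Finset.univ).orderIsoOfFin rfl) l).2)
  refine ⟨m, ?_⟩
  show ((Finset.image g Finset.univ).orderIsoOfFin rfl).symm ⟨g m, _⟩ = l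
  rw [show (⟨g m, Finset.mem_image_of_mem g (Finset.mem_univ m)⟩ :
      {x // x ∈ Finset.image g Finset.univ}) =
      ((Finset.image g Finset.univ).orderIsoOfFin rfl) l from Subtype.ext hm]
  exact OrderIso.symm_apply_apply _ _

lemma pair_heq {n k k' : ℕ} (hk : k' = k) (P : (Fin n → Fin k') × (Fin k' → ℕ))
    (f : Fin n → Fin k) (h : Fin k → ℕ)
    (hF : ∀ m, (P.1 m : ℕ) = (f m : ℕ)) (hH : ∀ l, P.2 l = h (Fin.cast hk l)) :
    HEq P (f, h) := by
  subst hk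
  refine heq_of_eq (Prod.ext ?_ ?_)
  · funext m; exact Fin.ext (hF m)
  · funext l; simpa using hH l

lemma QSbwd_eq {n k : ℕ} (f : Fin n → Fin k) (h : Fin k → ℕ)
    (hf : Function.Surjective f) (hh : StrictMono h) :
    QSbwd (fun m => h (f m)) = ⟨k, f, h⟩ := by
  set g : Fin n → ℕ := fun m => h (f m) with hgdef
  have himg : Finset.image g Finset.univ = Finset.image h Finset.univ := by
    ext x
    simp only [Finset.mem_image, Finset.mem_univ, true_and]
    constructor
    · rintro ⟨m, rfl⟩; exact ⟨f m, rfl⟩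
    · rintro ⟨l, rfl⟩; obtain ⟨m, rfl⟩ := hf l; exact ⟨m, rfl⟩
  have hcard : (Finset.image g Finset.univ).card = k := by
    rw [himg, Finset.card_image_of_injective _ hh.injective, Finset.card_univ,
      Fintype.card_fin]
  have hH : ∀ l, (QSbwd g).2.2 l = h (Fin.cast hcard l) := by
    have hemb : (fun l : Fin (Finset.image g Finset.univ).card => h (Fin.cast hcard l))
        = ⇑((Finset.image g Finset.univ).orderEmbOfFin rfl) := by
      refine Finset.orderEmbOfFin_unique rfl (fun l => ?_) ?_
      · obtain ⟨m, hm⟩ := hf (Fin.cast hcard l)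
        exact Finset.mem_image.mpr ⟨m, Finset.mem_univ m, by show h (f m) = _; rw [hm]⟩
      · exact hh.comp (fun a b hab => hab)
    intro l
    show (((Finset.image g Finset.univ).orderIsoOfFin rfl) l : ℕ) = _
    exact (congrFun hemb l).symm
  have hF : ∀ m, ((QSbwd g).2.1 m : ℕ) = (f m : ℕ) := by
    intro m
    have h1 : (QSbwd g).2.2 ((QSbwd g).2.1 m) = g m := QSbwd_apply g m
    rw [hH] at h1
    have h2 : h (Fin.cast hcard ((QSbwd g).2.1 m)) = h (f m) := h1
    exact congrArg Fin.val (hh.injective h2)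
  exact Sigma.ext hcard (pair_heq hcard _ f h hF hH)

set_option maxHeartbeats 1000000 in
open scoped Classical in
/-- **Quasi-shuffle identity via surjections.** For words `u = a_1⋯a_{k₁}` and
`v = a_{k₁+1}⋯a_{k₁+k₂}` over the alphabet of nonzero exponent vectors,
`⟨ISS_{s,t}(z), u⟩ ⊙ ⟨ISS_{s,t}(z), v⟩
  = ⊕_{k = max(k₁,k₂)}^{k₁+k₂} ⊕_{f ∈ qSh(k₁,k₂;k)} ⟨ISS_{s,t}(z), b^f_1 ⋯ b^f_k⟩`,
where `b^f_l = Σ_{m ∈ f⁻¹({l})} a_m` (componentwise sum of exponent vectors). -/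
theorem quasi_shuffle_via_surjections {S : Type*} [CommSemiring S] {d : ℕ}
    (z : ℕ → Fin d → S) (k₁ k₂ : ℕ) (hk₁ : 0 < k₁) (hk₂ : 0 < k₂)
    (u : Fin k₁ → Fin d → ℕ) (v : Fin k₂ → Fin d → ℕ)
    (hu : ∀ i, u i ≠ 0) (hv : ∀ i, v i ≠ 0)
    (s t : ℕ) (hst : s ≤ t) :
    ISS z s t (List.ofFn u) * ISS z s t (List.ofFn v) =
      ∑ k ∈ Finset.Icc (max k₁ k₂) (k₁ + k₂),
        ∑ f ∈ Finset.univ.filter (fun f : Fin (k₁ + k₂) → Fin k => IsQuasiShuffle k₁ k₂ k f),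
          ISS z s t
            (List.ofFn fun l : Fin k =>
              ∑ m ∈ Finset.univ.filter (fun m => f m = l), Fin.append u v m) := by
  classical
  have hRHS : ∀ (k : ℕ) (f : Fin (k₁ + k₂) → Fin k),
      ISS z s t (List.ofFn fun l : Fin k =>
          ∑ m ∈ Finset.univ.filter (fun m => f m = l), Fin.append u v m)
        = ∑ h ∈ SM k s t, ∏ m, monom (z (h (f m))) (Fin.append u v m) := by
    intro k f
    rw [ISS_eq_sum]
    refine Finset.sum_congr rfl fun h _ => ?_
    calc ∏ l, monom (z (h l)) (∑ m ∈ Finset.univ.filter (fun m => f m = l), Fin.append u v m)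
        = ∏ l, ∏ m ∈ Finset.univ.filter (fun m => f m = l),
            monom (z (h l)) (Fin.append u v m) :=
          Finset.prod_congr rfl fun l _ => monom_sum _ _ _
      _ = ∏ l, ∏ m ∈ Finset.univ.filter (fun m => f m = l),
            monom (z (h (f m))) (Fin.append u v m) :=
          Finset.prod_congr rfl fun l _ => Finset.prod_congr rfl fun m hm => by
            rw [(Finset.mem_filter.mp hm).2]
      _ = ∏ m, monom (z (h (f m))) (Fin.append u v m) := Finset.prod_fiberwise _ _ _
  have hterm : ∀ (g₁ : Fin k₁ → ℕ) (g₂ : Fin k₂ → ℕ),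
      (∏ i, monom (z (g₁ i)) (u i)) * (∏ i, monom (z (g₂ i)) (v i))
        = ∏ m, monom (z (Fin.append g₁ g₂ m)) (Fin.append u v m) := by
    intro g₁ g₂
    rw [Fin.prod_univ_add]
    simp [Fin.append_left, Fin.append_right]
  simp only [hRHS]
  rw [ISS_eq_sum z t u s, ISS_eq_sum z t v s, Finset.sum_mul_sum]
  simp only [hterm]
  rw [← Finset.sum_product']
  simp only [← Finset.sum_product']
  simp only [Finset.sum_sigma']
  refine Finset.sum_nbij' (fun p => QSbwd (Fin.append p.1 p.2))
    (fun x => (fun i => x.2.2 (x.2.1 (Fin.castAdd k₂ i)),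
               fun i => x.2.2 (x.2.1 (Fin.natAdd k₁ i)))) ?_ ?_ ?_ ?_ ?_
  · rintro ⟨g₁, g₂⟩ hp
    rw [Finset.mem_product] at hp
    obtain ⟨h1, h2⟩ := hp
    rw [mem_SM] at h1 h2
    set g := Fin.append g₁ g₂ with hg
    have hgmem : ∀ m, g m ∈ Finset.Ioc s t := by
      intro m
      refine Fin.addCases ?_ ?_ m
      · intro i; rw [hg, Fin.append_left]; exact h1.1 i
      · intro i; rw [hg, Fin.append_right]; exact h2.1 i
    have hmono1 : ∀ i j : Fin (k₁ + k₂), (i : ℕ) < j → (j : ℕ) < k₁ → g i < g j := by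
      intro i j hij hj
      have hi' : (i : ℕ) < k₁ := lt_trans hij hj
      have e1 : g i = g₁ ⟨(i : ℕ), hi'⟩ := by
        rw [hg]
        conv_lhs => rw [show i = Fin.castAdd k₂ ⟨(i : ℕ), hi'⟩ from Fin.ext rfl]
        rw [Fin.append_left]
      have e2 : g j = g₁ ⟨(j : ℕ), hj⟩ := by
        rw [hg]
        conv_lhs => rw [show j = Fin.castAdd k₂ ⟨(j : ℕ), hj⟩ from Fin.ext rfl]
        rw [Fin.append_left]
      rw [e1, e2]
      exact h1.2 hij
    have hmono2 : ∀ i j : Fin (k₁ + k₂), k₁ ≤ (i : ℕ) → (i : ℕ) < j → g i < g j := by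
      intro i j hi hij
      have hj' : k₁ ≤ (j : ℕ) := le_trans hi hij.le
      have e1 : g i = g₂ ⟨(i : ℕ) - k₁, by omega⟩ := by
        rw [hg]
        conv_lhs => rw [show i = Fin.natAdd k₁ ⟨(i : ℕ) - k₁, by omega⟩ from
          Fin.ext (show (i : ℕ) = k₁ + ((i : ℕ) - k₁) by omega)]
        rw [Fin.append_right]
      have e2 : g j = g₂ ⟨(j : ℕ) - k₁, by omega⟩ := by
        rw [hg]
        conv_lhs => rw [show j = Fin.natAdd k₁ ⟨(j : ℕ) - k₁, by omega⟩ from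
          Fin.ext (show (j : ℕ) = k₁ + ((j : ℕ) - k₁) by omega)]
        rw [Fin.append_right]
      rw [e1, e2]
      exact h2.2 (show (i : ℕ) - k₁ < (j : ℕ) - k₁ by omega)
    have hsub1 : Finset.image g₁ Finset.univ ⊆ Finset.image g Finset.univ := by
      intro x hx
      obtain ⟨i, -, rfl⟩ := Finset.mem_image.mp hx
      exact Finset.mem_image.mpr ⟨Fin.castAdd k₂ i, Finset.mem_univ _,
        by rw [hg, Fin.append_left]⟩
    have hsub2 : Finset.image g₂ Finset.univ ⊆ Finset.image g Finset.univ := by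
      intro x hx
      obtain ⟨i, -, rfl⟩ := Finset.mem_image.mp hx
      exact Finset.mem_image.mpr ⟨Fin.natAdd k₁ i, Finset.mem_univ _,
        by rw [hg, Fin.append_right]⟩
    have hc1 : k₁ ≤ (Finset.image g Finset.univ).card := by
      calc k₁ = (Finset.image g₁ Finset.univ).card := by
            rw [Finset.card_image_of_injective _ h1.2.injective, Finset.card_univ,
              Fintype.card_fin]
        _ ≤ _ := Finset.card_le_card hsub1
    have hc2 : k₂ ≤ (Finset.image g Finset.univ).card := by
      calc k₂ = (Finset.image g₂ Finset.univ).card := by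
            rw [Finset.card_image_of_injective _ h2.2.injective, Finset.card_univ,
              Fintype.card_fin]
        _ ≤ _ := Finset.card_le_card hsub2
    rw [Finset.mem_sigma]
    constructor
    · rw [Finset.mem_Icc]
      refine ⟨max_le hc1 hc2, ?_⟩
      calc (Finset.image g Finset.univ).card ≤ Finset.univ.card := Finset.card_image_le
        _ = k₁ + k₂ := by rw [Finset.card_univ, Fintype.card_fin]
    · rw [Finset.mem_product]
      constructor
      · rw [Finset.mem_filter]
        refine ⟨Finset.mem_univ _, QSbwd_surj g, ?_, ?_⟩
        · intro i j hij hj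
          exact (QSbwd_lt_iff g i j).mpr (hmono1 i j hij hj)
        · intro i j hi hij
          exact (QSbwd_lt_iff g i j).mpr (hmono2 i j hi hij)
      · rw [mem_SM]
        refine ⟨fun l => ?_, QSbwd_h_strictMono g⟩
        obtain ⟨m, -, hm⟩ := Finset.mem_image.mp (QSbwd_h_mem g l)
        rw [← hm]
        exact hgmem m
  · rintro ⟨k, f, h⟩ hx
    rw [Finset.mem_sigma] at hx
    obtain ⟨-, hx2⟩ := hx
    rw [Finset.mem_product] at hx2
    obtain ⟨hf, hh⟩ := hx2
    rw [Finset.mem_filter] at hf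
    obtain ⟨-, -, hf1, hf2⟩ := hf
    rw [mem_SM] at hh
    rw [Finset.mem_product]
    constructor <;> rw [mem_SM]
    · refine ⟨fun i => hh.1 _, fun a b hab => hh.2 (hf1 _ _ ?_ ?_)⟩
      · exact hab
      · exact b.isLt
    · refine ⟨fun i => hh.1 _, fun a b hab => hh.2 (hf2 _ _ ?_ ?_)⟩
      · exact Nat.le_add_right k₁ a
      · exact Nat.add_lt_add_left hab k₁
  · rintro ⟨g₁, g₂⟩ _
    refine Prod.ext ?_ ?_ <;> funext i
    · show (QSbwd (Fin.append g₁ g₂)).2.2 ((QSbwd (Fin.append g₁ g₂)).2.1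
        (Fin.castAdd k₂ i)) = g₁ i
      rw [QSbwd_apply, Fin.append_left]
    · show (QSbwd (Fin.append g₁ g₂)).2.2 ((QSbwd (Fin.append g₁ g₂)).2.1
        (Fin.natAdd k₁ i)) = g₂ i
      rw [QSbwd_apply, Fin.append_right]
  · rintro ⟨k, f, h⟩ hx
    rw [Finset.mem_sigma] at hx
    obtain ⟨-, hx2⟩ := hx
    rw [Finset.mem_product] at hx2
    obtain ⟨hf, hh⟩ := hx2
    rw [Finset.mem_filter] at hf
    rw [mem_SM] at hh
    have hg : Fin.append (fun i => h (f (Fin.castAdd k₂ i)))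
        (fun i => h (f (Fin.natAdd k₁ i))) = fun m => h (f m) := by
      funext m
      refine Fin.addCases ?_ ?_ m
      · intro i; rw [Fin.append_left]
      · intro i; rw [Fin.append_right]
    show QSbwd _ = _
    rw [hg]
    exact QSbwd_eq f h hf.2.1 hh.2
  · rintro ⟨g₁, g₂⟩ _
    exact Finset.prod_congr rfl fun m _ => by rw [QSbwd_apply]
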